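/- arXiv:2107.02172 — 2 statements merged into one kernel-verified Lean document; each statement's English description precedes it below -/
import Mathlib

section
/- Let u ∈ ℝ^q and let B be a positive definite symmetric bilinear form on ℝ^q. Define ν(w) = ⟨w, u⟩ / √(B(w,w)) for w ∈ ℝ^q \ {0}. If w₁, w₂ ∈ ℝ^q are linearly independent with ν(w₁) > 0 and ν(w₂) > 0, then for every t ∈ (0,1), ν(t w₁ + (1−t) w₂) > min(ν(w₁), ν(w₂)). -/
/-- Strict quasi-concavity of `ν(w) = ⟨w,u⟩/√(B(w,w))` on the locus where it is
positive: for a positive definite symmetric bilinear form `B` on `ℝ^q` and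
linearly independent `w₁, w₂` with `ν(w₁), ν(w₂) > 0`, one has
`ν(t w₁ + (1−t) w₂) > min(ν(w₁), ν(w₂))` for all `t ∈ (0,1)`. -/
theorem strict_quasiconcavity (q : ℕ) (u : Fin q → ℝ)
    (B : (Fin q → ℝ) →ₗ[ℝ] (Fin q → ℝ) →ₗ[ℝ] ℝ)
    (hBsymm : ∀ v w, B v w = B w v)
    (hBpos : ∀ w : Fin q → ℝ, w ≠ 0 → 0 < B w w)
    (ν : (Fin q → ℝ) → ℝ)
    (hν : ∀ w, ν w = (∑ i, w i * u i) / Real.sqrt (B w w))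
    (w₁ w₂ : Fin q → ℝ) (hind : LinearIndependent ℝ ![w₁, w₂])
    (h₁ : 0 < ν w₁) (h₂ : 0 < ν w₂)
    (t : ℝ) (ht : t ∈ Set.Ioo (0 : ℝ) 1) :
    min (ν w₁) (ν w₂) < ν (t • w₁ + (1 - t) • w₂) := by
  obtain ⟨ht0, ht1⟩ := ht
  rw [LinearIndependent.pair_iff] at hind
  have hw₁ : w₁ ≠ 0 := by
    intro h
    exact one_ne_zero (hind 1 0 (by simp [h])).1
  have hw₂ : w₂ ≠ 0 := by
    intro h
    exact one_ne_zero (hind 0 1 (by simp [h])).2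
  set w : Fin q → ℝ := t • w₁ + (1 - t) • w₂ with hwdef
  have hw : w ≠ 0 := fun h => ht0.ne' (hind t (1 - t) h).1
  have hB₁ : 0 < B w₁ w₁ := hBpos w₁ hw₁
  have hB₂ : 0 < B w₂ w₂ := hBpos w₂ hw₂
  have hBw : 0 < B w w := hBpos w hw
  set a := Real.sqrt (B w₁ w₁) with ha
  set b := Real.sqrt (B w₂ w₂) with hb
  have ha0 : 0 < a := Real.sqrt_pos.mpr hB₁
  have hb0 : 0 < b := Real.sqrt_pos.mpr hB₂
  have ha2 : a ^ 2 = B w₁ w₁ := Real.sq_sqrt hB₁.le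
  have hb2 : b ^ 2 = B w₂ w₂ := Real.sq_sqrt hB₂.le
  -- strict Cauchy-Schwarz
  set c := B w₁ w₂ / B w₂ w₂ with hc
  have hv : w₁ - c • w₂ ≠ 0 := by
    intro h
    have h' : (1 : ℝ) • w₁ + (-c) • w₂ = 0 := by
      rw [one_smul, neg_smul, ← sub_eq_add_neg]
      exact h
    exact one_ne_zero (hind 1 (-c) h').1
  have hvv : 0 < B (w₁ - c • w₂) (w₁ - c • w₂) := hBpos _ hv
  have hexp : B (w₁ - c • w₂) (w₁ - c • w₂)
      = B w₁ w₁ - 2 * c * B w₁ w₂ + c ^ 2 * B w₂ w₂ := by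
    simp only [map_sub, map_smul, LinearMap.sub_apply, LinearMap.smul_apply,
      smul_eq_mul]
    rw [hBsymm w₂ w₁]
    ring
  have hcs2 : (B w₁ w₂) ^ 2 < B w₁ w₁ * B w₂ w₂ := by
    rw [hexp, hc] at hvv
    have h1 : B w₁ w₁ - (B w₁ w₂) ^ 2 / B w₂ w₂ > 0 := by
      field_simp at hvv ⊢
      nlinarith [hvv]
    rw [gt_iff_lt, sub_pos, div_lt_iff₀ hB₂] at h1
    exact h1
  have hcs : B w₁ w₂ < a * b := by
    nlinarith [mul_pos ha0 hb0, hcs2, ha2, hb2]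
  -- B w w < (t*a + (1-t)*b)^2
  have hBww : B w w = t ^ 2 * B w₁ w₁ + 2 * t * (1 - t) * B w₁ w₂
      + (1 - t) ^ 2 * B w₂ w₂ := by
    simp only [hwdef, map_add, map_smul, LinearMap.add_apply, LinearMap.smul_apply,
      smul_eq_mul]
    rw [hBsymm w₂ w₁]
    ring
  have hkey : B w w < (t * a + (1 - t) * b) ^ 2 := by
    rw [hBww]
    nlinarith [mul_pos ht0 (sub_pos.mpr ht1), hcs, ha2, hb2]
  have hsq : Real.sqrt (B w w) < t * a + (1 - t) * b := by
    have hpos : 0 < t * a + (1 - t) * b :=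
      add_pos (mul_pos ht0 ha0) (mul_pos (sub_pos.mpr ht1) hb0)
    rw [show t * a + (1 - t) * b = Real.sqrt ((t * a + (1 - t) * b) ^ 2) from
      (Real.sqrt_sq hpos.le).symm]
    exact Real.sqrt_lt_sqrt hBw.le hkey
  have hsqpos : 0 < Real.sqrt (B w w) := Real.sqrt_pos.mpr hBw
  -- inner products
  have hu₁ : ∑ i, w₁ i * u i = ν w₁ * a := by
    rw [hν w₁] at h₁ ⊢; field_simp; rfl
  have hu₂ : ∑ i, w₂ i * u i = ν w₂ * b := by
    rw [hν w₂] at h₂ ⊢; field_simp; rfl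
  have hS : ∑ i, w i * u i = t * (ν w₁ * a) + (1 - t) * (ν w₂ * b) := by
    rw [← hu₁, ← hu₂, hwdef]
    simp only [Pi.add_apply, Pi.smul_apply, smul_eq_mul, Finset.mul_sum]
    rw [← Finset.sum_add_distrib]
    congr 1; ext i; ring
  set m := min (ν w₁) (ν w₂) with hm
  have hm0 : 0 < m := lt_min h₁ h₂
  have hm₁ : m ≤ ν w₁ := min_le_left _ _
  have hm₂ : m ≤ ν w₂ := min_le_right _ _
  rw [hν w, hS, lt_div_iff₀ hsqpos]
  have h1 : m * Real.sqrt (B w w) < m * (t * a + (1 - t) * b) :=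
    (mul_lt_mul_iff_right₀ hm0).mpr hsq
  have h2 : m * (t * a + (1 - t) * b) ≤ t * (ν w₁ * a) + (1 - t) * (ν w₂ * b) := by
    have e1 : m * (t * a) ≤ ν w₁ * (t * a) :=
      mul_le_mul_of_nonneg_right hm₁ (mul_pos ht0 ha0).le
    have e2 : m * ((1 - t) * b) ≤ ν w₂ * ((1 - t) * b) :=
      mul_le_mul_of_nonneg_right hm₂ (mul_pos (sub_pos.mpr ht1) hb0).le
    calc m * (t * a + (1 - t) * b) = m * (t * a) + m * ((1 - t) * b) := by ring
      _ ≤ ν w₁ * (t * a) + ν w₂ * ((1 - t) * b) := add_le_add e1 e2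
      _ = t * (ν w₁ * a) + (1 - t) * (ν w₂ * b) := by ring
  linarith
end

section
/- Fix an ordered real vector space V (e.g. ℝ[n] with the eventual-comparison order). Consider data consisting of: positive reals R_0, …, R_N (ranks of graded pieces), elements q_0, …, q_N ∈ V (reduced Hilbert polynomials of graded pieces), strictly increasing real weights w_0 < w_1 < … < w_N, and the total average q̄ = (Σ_h R_h q_h)/(Σ_h R_h). Define ν = (Σ_h w_h·(q_h − q̄)·R_h)/√(Σ_h w_h² R_h). Suppose ν ≥ 0 in V and that for some index i one has q_{i+1} ≤ q_i. Form the merged data with the pieces i and i+1 combined: ranks R_0, …, R_{i−1}, R_i + R_{i+1}, R_{i+2}, …, merged polynomial (R_i q_i + R_{i+1} q_{i+1})/(R_i + R_{i+1}), and weights R·w_h for h ∉ {i, i+1} and R_i w_i + R_{i+1} w_{i+1} for the merged piece, where R = R_i + R_{i+1}. Let ν' be the corresponding invariant of the merged data. Then ν' ≥ ν. -/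
/-- The ordered-scalar-multiplication class `OrderedSMul` of the older Mathlib, restated verbatim. -/
class OrderedSMul (R M : Type*) [Semiring R] [PartialOrder R] [AddCommMonoid M] [PartialOrder M]
    [SMulWithZero R M] : Prop where
  protected smul_lt_smul_of_pos : ∀ {a b : M} {c : R}, a < b → 0 < c → c • a < c • b
  protected lt_of_smul_lt_smul_of_pos : ∀ {a b : M} {c : R}, c • a < c • b → 0 < c → a < b

instance posSMulMono_of_orderedSMul {V : Type*} [AddCommGroup V] [PartialOrder V] [Module ℝ V]
    [OrderedSMul ℝ V] : PosSMulMono ℝ V :=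
  PosSMulMono.of_pos fun a ha b₁ b₂ hb => by
    rcases hb.eq_or_lt with h | h
    · rw [h]
    · exact (OrderedSMul.smul_lt_smul_of_pos h ha).le

private lemma sum_split3 {M : Type*} [AddCommMonoid M] (f : ℕ → M) {i N : ℕ} (h : i + 1 ≤ N) :
    ∑ h ∈ Finset.range (N + 1), f h =
      (∑ h ∈ Finset.range i, f h) + f i + f (i + 1) +
        ∑ h ∈ Finset.Ico (i + 2) (N + 1), f h := by
  rw [Finset.range_eq_Ico,
    ← Finset.sum_Ico_consecutive f (Nat.zero_le (i + 2)) (by omega : i + 2 ≤ N + 1),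
    ← Finset.range_eq_Ico, Finset.sum_range_succ, Finset.sum_range_succ]

private lemma sum_split2 {M : Type*} [AddCommMonoid M] (f : ℕ → M) {i N : ℕ} (h : i + 1 ≤ N) :
    ∑ h ∈ Finset.range N, f h =
      (∑ h ∈ Finset.range i, f h) + f i + ∑ h ∈ Finset.Ico (i + 1) N, f h := by
  rw [Finset.range_eq_Ico,
    ← Finset.sum_Ico_consecutive f (Nat.zero_le (i + 1)) (by omega : i + 1 ≤ N),
    ← Finset.range_eq_Ico, Finset.sum_range_succ]

private lemma sum_shift {M : Type*} [AddCommMonoid M] (f : ℕ → M) (a b : ℕ) :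
    ∑ h ∈ Finset.Ico (a + 1) (b + 1), f h = ∑ h ∈ Finset.Ico a b, f (h + 1) := by
  rw [Finset.sum_Ico_eq_sum_range, Finset.sum_Ico_eq_sum_range]
  have : b + 1 - (a + 1) = b - a := by omega
  rw [this]
  exact Finset.sum_congr rfl fun x _ => by rw [show a + 1 + x = a + x + 1 by omega]

private lemma smul_le_smul_right'' {V : Type*} [AddCommGroup V] [PartialOrder V] [IsOrderedAddMonoid V] [Module ℝ V]
    [OrderedSMul ℝ V] {c d : ℝ} {x : V} (h : c ≤ d) (hx : 0 ≤ x) : c • x ≤ d • x := by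
  have h1 : (0 : V) ≤ (d - c) • x := smul_nonneg (by linarith) hx
  rw [sub_smul] at h1
  exact sub_nonneg.1 h1

/-- The deletion lemma: merging two adjacent graded pieces whose reduced
Hilbert polynomials are in non-convex position (`q_{i+1} ≤ q_i`) does not
decrease the numerical invariant `ν = (Σ_h w_h (q_h − q̄) R_h)/√(Σ_h w_h² R_h)`,
provided `ν ≥ 0`. The merged data has ranks `R_i + R_{i+1}` at the merged spot,
merged polynomial `(R_i q_i + R_{i+1} q_{i+1})/(R_i + R_{i+1})`, and weights
`R·w_h` away from the merged piece and `R_i w_i + R_{i+1} w_{i+1}` at it, where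
`R = R_i + R_{i+1}`. -/
theorem deletion_lemma {V : Type*} [AddCommGroup V] [PartialOrder V] [IsOrderedAddMonoid V] [Module ℝ V]
    [OrderedSMul ℝ V]
    (N i : ℕ) (hiN : i + 1 ≤ N)
    (R : ℕ → ℝ) (q : ℕ → V) (w : ℕ → ℝ)
    (hR : ∀ h ≤ N, 0 < R h)
    (hw : ∀ a b : ℕ, a < b → b ≤ N → w a < w b)
    (hq : q (i + 1) ≤ q i)
    (qbar : V)
    (hqbar : qbar = (∑ h ∈ Finset.range (N + 1), R h)⁻¹ •
        ∑ h ∈ Finset.range (N + 1), R h • q h)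
    (R' : ℕ → ℝ)
    (hR' : ∀ j, R' j = if j < i then R j
        else if j = i then R i + R (i + 1) else R (j + 1))
    (q' : ℕ → V)
    (hq' : ∀ j, q' j = if j < i then q j
        else if j = i then
          (R i + R (i + 1))⁻¹ • (R i • q i + R (i + 1) • q (i + 1))
        else q (j + 1))
    (w' : ℕ → ℝ)
    (hw' : ∀ j, w' j = if j < i then (R i + R (i + 1)) * w j
        else if j = i then R i * w i + R (i + 1) * w (i + 1)
        else (R i + R (i + 1)) * w (j + 1))
    (ν ν' : V)
    (hν : ν = (Real.sqrt (∑ h ∈ Finset.range (N + 1), w h ^ 2 * R h))⁻¹ •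
        ∑ h ∈ Finset.range (N + 1), (w h * R h) • (q h - qbar))
    (hν' : ν' = (Real.sqrt (∑ h ∈ Finset.range N, w' h ^ 2 * R' h))⁻¹ •
        ∑ h ∈ Finset.range N, (w' h * R' h) • (q' h - qbar))
    (hν0 : 0 ≤ ν) :
    ν ≤ ν' := by
  have hiN' : i ≤ N := by omega
  have hRi : 0 < R i := hR i hiN'
  have hRj : 0 < R (i + 1) := hR (i + 1) hiN
  have hRm : 0 < R i + R (i + 1) := by linarith
  have hRmne : R i + R (i + 1) ≠ 0 := hRm.ne'
  have hWij : w i < w (i + 1) := hw i (i + 1) (lt_add_one i) hiN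
  set b := ∑ h ∈ Finset.range (N + 1), w h ^ 2 * R h with hb_def
  set L := ∑ h ∈ Finset.range (N + 1), (w h * R h) • (q h - qbar) with hL_def
  set b' := ∑ h ∈ Finset.range N, w' h ^ 2 * R' h with hb'_def
  set L' := ∑ h ∈ Finset.range N, (w' h * R' h) • (q' h - qbar) with hL'_def
  -- positivity of b
  have hbterm : ∀ h ∈ Finset.range (N + 1), 0 ≤ w h ^ 2 * R h := fun h hh =>
    mul_nonneg (sq_nonneg _) (hR h (by have := Finset.mem_range.1 hh; omega)).le
  have hb_pos : 0 < b := by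
    rcases eq_or_ne (w i) 0 with h0 | h0
    · refine Finset.sum_pos' hbterm ⟨i + 1, Finset.mem_range.2 (by omega), ?_⟩
      have hwne : w (i + 1) ≠ 0 := by rw [h0] at hWij; linarith
      exact mul_pos ((sq_nonneg _).lt_of_ne (Ne.symm (pow_ne_zero 2 hwne))) hRj
    · refine Finset.sum_pos' hbterm ⟨i, Finset.mem_range.2 (by omega), ?_⟩
      exact mul_pos ((sq_nonneg _).lt_of_ne (Ne.symm (pow_ne_zero 2 h0))) hRi
  have hsb : 0 < Real.sqrt b := Real.sqrt_pos.2 hb_pos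
  -- computation of b'
  have hb'c : b' = (R i + R (i + 1)) ^ 2 * (∑ h ∈ Finset.range i, w h ^ 2 * R h) +
      (R i * w i + R (i + 1) * w (i + 1)) ^ 2 * (R i + R (i + 1)) +
      (R i + R (i + 1)) ^ 2 * (∑ h ∈ Finset.Ico (i + 2) (N + 1), w h ^ 2 * R h) := by
    rw [hb'_def, sum_split2 _ hiN]
    congr 1
    · congr 1
      · rw [Finset.mul_sum]
        refine Finset.sum_congr rfl fun h hh => ?_
        have hlt := Finset.mem_range.1 hh
        rw [hw' h, hR' h, if_pos hlt, if_pos hlt]; ring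
      · rw [hw' i, hR' i, if_neg (lt_irrefl i), if_neg (lt_irrefl i), if_pos rfl, if_pos rfl]
    · rw [show i + 2 = (i + 1) + 1 from rfl, sum_shift, Finset.mul_sum]
      refine Finset.sum_congr rfl fun h hh => ?_
      have hm := Finset.mem_Ico.1 hh
      rw [hw' h, hR' h, if_neg (by omega), if_neg (by omega), if_neg (by omega),
        if_neg (by omega)]
      ring
  have hb_split := sum_split3 (fun h => w h ^ 2 * R h) hiN
  rw [← hb_def] at hb_split
  have hb'_eq : b' = (R i + R (i + 1)) ^ 2 * b -
      (R i + R (i + 1)) * (R i * R (i + 1) * (w (i + 1) - w i) ^ 2) := by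
    rw [hb'c, hb_split]; ring
  -- computation of L'
  have hkey : ((R i * w i + R (i + 1) * w (i + 1)) * (R i + R (i + 1))) •
        ((R i + R (i + 1))⁻¹ • (R i • q i + R (i + 1) • q (i + 1)) - qbar) =
      (R i + R (i + 1)) • ((w i * R i) • (q i - qbar)) +
      (R i + R (i + 1)) • ((w (i + 1) * R (i + 1)) • (q (i + 1) - qbar)) +
      (R i * R (i + 1) * (w (i + 1) - w i)) • (q i - q (i + 1)) := by
    match_scalars <;> field_simp <;> ring
  have hL'c : L' = (R i + R (i + 1)) • (∑ h ∈ Finset.range i, (w h * R h) • (q h - qbar)) +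
      (((R i * w i + R (i + 1) * w (i + 1)) * (R i + R (i + 1))) •
        ((R i + R (i + 1))⁻¹ • (R i • q i + R (i + 1) • q (i + 1)) - qbar)) +
      (R i + R (i + 1)) •
        (∑ h ∈ Finset.Ico (i + 2) (N + 1), (w h * R h) • (q h - qbar)) := by
    rw [hL'_def, sum_split2 _ hiN]
    congr 1
    · congr 1
      · rw [Finset.smul_sum]
        refine Finset.sum_congr rfl fun h hh => ?_
        have hlt := Finset.mem_range.1 hh
        rw [hw' h, hR' h, hq' h, if_pos hlt, if_pos hlt, if_pos hlt, mul_assoc, mul_smul]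
      · rw [hw' i, hR' i, hq' i, if_neg (lt_irrefl i), if_neg (lt_irrefl i),
          if_neg (lt_irrefl i), if_pos rfl, if_pos rfl, if_pos rfl]
    · rw [show i + 2 = (i + 1) + 1 from rfl, sum_shift, Finset.smul_sum]
      refine Finset.sum_congr rfl fun h hh => ?_
      have hm := Finset.mem_Ico.1 hh
      rw [hw' h, hR' h, hq' h, if_neg (by omega), if_neg (by omega), if_neg (by omega),
        if_neg (by omega), if_neg (by omega), if_neg (by omega), mul_assoc, mul_smul]
  have hL_split := sum_split3 (fun h => (w h * R h) • (q h - qbar)) hiN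
  rw [← hL_def] at hL_split
  have hL'_eq : L' = (R i + R (i + 1)) • L +
      (R i * R (i + 1) * (w (i + 1) - w i)) • (q i - q (i + 1)) := by
    rw [hL'c, hkey, hL_split]
    module
  have hcnn : 0 ≤ R i * R (i + 1) * (w (i + 1) - w i) :=
    mul_nonneg (mul_nonneg hRi.le hRj.le) (by linarith)
  have hdnn : (0 : V) ≤ q i - q (i + 1) := sub_nonneg.2 hq
  have hcd : (0 : V) ≤ (R i * R (i + 1) * (w (i + 1) - w i)) • (q i - q (i + 1)) :=
    smul_nonneg hcnn hdnn
  have hb'term : ∀ h ∈ Finset.range N, 0 ≤ w' h ^ 2 * R' h := by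
    intro h hh
    have hlt := Finset.mem_range.1 hh
    have hRp : 0 < R' h := by
      rw [hR' h]
      split_ifs with h1 h2
      · exact hR h (by omega)
      · exact hRm
      · exact hR (h + 1) (by omega)
    exact mul_nonneg (sq_nonneg _) hRp.le
  have hb'_nonneg : (0 : ℝ) ≤ b' := Finset.sum_nonneg hb'term
  rcases eq_or_lt_of_le hb'_nonneg with heq | hpos
  · -- degenerate case b' = 0
    have hterms := (Finset.sum_eq_zero_iff_of_nonneg hb'term).1 heq.symm
    have hL'0 : L' = 0 := by
      rw [hL'_def]
      refine Finset.sum_eq_zero fun h hh => ?_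
      have ht := hterms h hh
      have hRp : 0 < R' h := by
        rw [hR' h]
        have hlt := Finset.mem_range.1 hh
        split_ifs with h1 h2
        · exact hR h (by omega)
        · exact hRm
        · exact hR (h + 1) (by omega)
      have hw0 : w' h = 0 := by
        rcases mul_eq_zero.1 ht with h1 | h1
        · exact (pow_eq_zero_iff two_ne_zero).1 h1
        · exact absurd h1 hRp.ne'
      rw [hw0, zero_mul, zero_smul]
    have hRLle : (R i + R (i + 1)) • L ≤ 0 := by
      have : (R i + R (i + 1)) • L = -((R i * R (i + 1) * (w (i + 1) - w i)) •
          (q i - q (i + 1))) := by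
        have := hL'_eq
        rw [hL'0] at this
        linear_combination (norm := module) -this
      rw [this]
      exact neg_nonpos.2 hcd
    have hLle : L ≤ 0 := by
      have h1 : (R i + R (i + 1))⁻¹ • ((R i + R (i + 1)) • L) ≤
          (R i + R (i + 1))⁻¹ • (0 : V) :=
        smul_le_smul_of_nonneg_left hRLle (inv_nonneg.2 hRm.le)
      rwa [smul_smul, inv_mul_cancel₀ hRmne, one_smul, smul_zero] at h1
    have hνle : ν ≤ 0 := by
      rw [hν]
      have h1 : (Real.sqrt b)⁻¹ • L ≤ (Real.sqrt b)⁻¹ • (0 : V) :=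
        smul_le_smul_of_nonneg_left hLle (inv_nonneg.2 hsb.le)
      rwa [smul_zero] at h1
    have hν'0 : ν' = 0 := by rw [hν', hL'0, smul_zero]
    rw [hν'0]; exact hνle
  · -- main case b' > 0
    have hsb' : 0 < Real.sqrt b' := Real.sqrt_pos.2 hpos
    have hLnn : (0 : V) ≤ L := by
      have h1 : Real.sqrt b • (0 : V) ≤ Real.sqrt b • ν :=
        smul_le_smul_of_nonneg_left hν0 hsb.le
      rw [smul_zero, hν, smul_smul, mul_inv_cancel₀ hsb.ne', one_smul] at h1
      exact h1
    have hb'le : b' ≤ (R i + R (i + 1)) ^ 2 * b := by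
      have hnn : 0 ≤ (R i + R (i + 1)) * (R i * R (i + 1) * (w (i + 1) - w i) ^ 2) := by
        positivity
      linarith [hb'_eq]
    have hsble : Real.sqrt b' ≤ (R i + R (i + 1)) * Real.sqrt b := by
      have h1 : Real.sqrt b' ≤ Real.sqrt ((R i + R (i + 1)) ^ 2 * b) :=
        Real.sqrt_le_sqrt hb'le
      rwa [Real.sqrt_mul (sq_nonneg _), Real.sqrt_sq hRm.le] at h1
    have hscal : (Real.sqrt b)⁻¹ ≤ (Real.sqrt b')⁻¹ * (R i + R (i + 1)) := by
      have h1 : ((R i + R (i + 1)) * Real.sqrt b)⁻¹ ≤ (Real.sqrt b')⁻¹ :=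
        inv_anti₀ hsb' hsble
      have h2 : ((R i + R (i + 1)) * Real.sqrt b)⁻¹ * (R i + R (i + 1)) ≤
          (Real.sqrt b')⁻¹ * (R i + R (i + 1)) :=
        mul_le_mul_of_nonneg_right h1 hRm.le
      calc (Real.sqrt b)⁻¹ = ((R i + R (i + 1)) * Real.sqrt b)⁻¹ * (R i + R (i + 1)) := by
            field_simp
        _ ≤ (Real.sqrt b')⁻¹ * (R i + R (i + 1)) := h2
    calc ν = (Real.sqrt b)⁻¹ • L := hν
      _ ≤ ((Real.sqrt b')⁻¹ * (R i + R (i + 1))) • L := smul_le_smul_right'' hscal hLnn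
      _ = (Real.sqrt b')⁻¹ • ((R i + R (i + 1)) • L) := by rw [smul_smul]
      _ ≤ (Real.sqrt b')⁻¹ • L' := by
          refine smul_le_smul_of_nonneg_left ?_ (inv_nonneg.2 hsb'.le)
          rw [hL'_eq]
          exact le_add_of_nonneg_right hcd
      _ = ν' := hν'.symm
end
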